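/- Let y, y' ∈ ℝ^d with |y| = |y'| = 1, let a, b ∈ ℝ and v ∈ ℝ^d, and suppose (1 + a) y = (1 + b) y' + v. Then |a - b - v·y| ≤ ½ (1 + |b|) |y - y'|². -/

import Mathlib

/-- If `y, y'` are unit vectors in `ℝ^d`, `a b : ℝ`, `v ∈ ℝ^d`, and
`(1 + a) y = (1 + b) y' + v`, then `|a - b - v·y| ≤ ½ (1 + |b|) |y - y'|²`. -/
theorem stmt1 {d : ℕ} (y y' v : EuclideanSpace ℝ (Fin d)) (a b : ℝ)
    (hy : ‖y‖ = 1) (hy' : ‖y'‖ = 1)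
    (h : (1 + a) • y = (1 + b) • y' + v) :
    |a - b - (inner ℝ v y : ℝ)| ≤ (1/2) * (1 + |b|) * ‖y - y'‖^2 := by
  have hinner : (inner ℝ ((1 + a) • y) y : ℝ) = inner ℝ ((1 + b) • y' + v) y := by rw [h]
  have hyy : (inner ℝ y y : ℝ) = 1 := by
    rw [real_inner_self_eq_norm_sq, hy]; norm_num
  rw [real_inner_smul_left, inner_add_left, real_inner_smul_left, hyy] at hinner
  have hnorm : ‖y - y'‖^2 = 2 - 2 * (inner ℝ y' y : ℝ) := by
    rw [norm_sub_sq_real, hy, hy', real_inner_comm]; ring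
  have key : a - b - (inner ℝ v y : ℝ) = -(1 + b) * (‖y - y'‖^2 / 2) := by
    rw [hnorm]; nlinarith [hinner]
  rw [key, abs_mul, abs_neg]
  have h1 : |1 + b| ≤ 1 + |b| := (abs_add_le 1 b).trans (by simp)
  have h2 : |‖y - y'‖^2 / 2| = ‖y - y'‖^2 / 2 := abs_of_nonneg (by positivity)
  rw [h2]
  nlinarith [sq_nonneg ‖y - y'‖]
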